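/- Let θ > 0, T > 0, H ∈ (1/2, 1), and α_H = H(2H−1). Then (α_H/(2θ²)) ∫_0^T ∫_0^T (1 − e^{−θ(T−u)})(1 − e^{−θ(T−v)}) |u−v|^{2H−2} du dv = (α_H/θ²)[ −(e^{−2θT}/(2θ)) ∫_0^T e^{θx} x^{2H−2} dx + (1/(2θ)) ∫_0^T e^{−θx} x^{2H−2} dx − (1/(2H−1)) ∫_0^T e^{−θx} x^{2H−1} dx − (e^{−θT}/(2H−1)) ∫_0^T e^{θx} x^{2H−1} dx + T^{2H}/((2H)(2H−1)) ]. -/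

import Mathlib

open Real

open MeasureTheory intervalIntegral Set

lemma cont_rpow {p : ℝ} (hp : 0 ≤ p) : Continuous fun x : ℝ => x ^ p := by
  rw [continuous_iff_continuousAt]
  intro x
  exact Real.continuousAt_rpow_const x p (Or.inr hp)

lemma integ_exp_rpow {s : ℝ} (hs : -1 < s) (c a b : ℝ) :
    IntervalIntegrable (fun x => Real.exp (c * x) * x ^ s) volume a b :=
  (intervalIntegrable_rpow' hs).continuousOn_mul
    ((Real.continuous_exp.comp (continuous_const.mul continuous_id)).continuousOn)

noncomputable def prim (c s u : ℝ) : ℝ := ∫ x in (0:ℝ)..u, Real.exp (c * x) * x ^ s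

lemma prim_zero (c s : ℝ) : prim c s 0 = 0 := intervalIntegral.integral_same

lemma prim_continuousOn {s : ℝ} (hs : -1 < s) (c T : ℝ) (hT : 0 ≤ T) :
    ContinuousOn (prim c s) (Icc 0 T) := by
  have h := intervalIntegral.continuousOn_primitive_interval'
    (integ_exp_rpow hs c 0 T) (left_mem_uIcc (a := (0:ℝ)) (b := T))
  rw [uIcc_of_le hT] at h
  exact h

lemma prim_hasDerivAt {s : ℝ} (hs : -1 < s) (c : ℝ) {x : ℝ} (hx : 0 < x) :
    HasDerivAt (prim c s) (Real.exp (c * x) * x ^ s) x := by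
  apply intervalIntegral.integral_hasDerivAt_right (integ_exp_rpow hs c 0 x)
  · refine ⟨Set.univ, Filter.univ_mem, ?_⟩
    apply Measurable.aestronglyMeasurable
    fun_prop
  · exact ((Real.continuous_exp.comp (continuous_const.mul continuous_id)).continuousAt).mul
      (Real.continuousAt_rpow_const x s (Or.inl hx.ne'))

lemma exp_mul_hasDerivAt (c x : ℝ) :
    HasDerivAt (fun x => Real.exp (c * x)) (c * Real.exp (c * x)) x := by
  have h := ((hasDerivAt_id x).const_mul c).exp
  simpa [mul_comm] using h

/-- by parts for powers -/
lemma P1 {s : ℝ} (hs : -1 < s) (hs1 : 0 < s + 1) {c T : ℝ} (hc : c ≠ 0) (hT : 0 ≤ T) :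
    ∫ x in (0:ℝ)..T, Real.exp (c * x) * x ^ (s + 1) =
      (1 / c) * Real.exp (c * T) * T ^ (s + 1)
        - ((s + 1) / c) * ∫ x in (0:ℝ)..T, Real.exp (c * x) * x ^ s := by
  have hder : ∀ x ∈ Ioo 0 T, HasDerivAt (fun x => (1 / c) * (Real.exp (c * x) * x ^ (s + 1)))
      (Real.exp (c * x) * x ^ (s + 1) + (s + 1) / c * (Real.exp (c * x) * x ^ s)) x := by
    intro x hx
    have h2 : HasDerivAt (fun x : ℝ => x ^ (s + 1)) ((s + 1) * x ^ s) x := by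
      have := Real.hasDerivAt_rpow_const (x := x) (p := s + 1) (Or.inl hx.1.ne')
      simpa [show s + 1 - 1 = s by ring] using this
    have h := ((exp_mul_hasDerivAt c x).mul h2).const_mul (1 / c)
    refine h.congr_deriv ?_
    field_simp
  have hcont : ContinuousOn (fun x => (1 / c) * (Real.exp (c * x) * x ^ (s + 1))) (Icc 0 T) :=
    (continuous_const.mul ((Real.continuous_exp.comp
      (continuous_const.mul continuous_id)).mul (cont_rpow hs1.le))).continuousOn
  have hint := (integ_exp_rpow (by linarith : (-1:ℝ) < s + 1) c 0 T).add
    ((integ_exp_rpow hs c 0 T).const_mul ((s + 1) / c))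
  have key := intervalIntegral.integral_eq_sub_of_hasDerivAt_of_le hT hcont hder hint
  rw [intervalIntegral.integral_add (integ_exp_rpow (by linarith) c 0 T)
      ((integ_exp_rpow hs c 0 T).const_mul _), intervalIntegral.integral_const_mul] at key
  simp only [Real.zero_rpow hs1.ne', mul_zero, sub_zero] at key
  linear_combination key

/-- by parts for primitives -/
lemma P2 {s : ℝ} (hs : -1 < s) {c : ℝ} (c' : ℝ) (hc : c ≠ 0) {T : ℝ} (hT : 0 ≤ T) :
    ∫ x in (0:ℝ)..T, Real.exp (c * x) * prim c' s x =
      (1 / c) * Real.exp (c * T) * prim c' s T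
        - (1 / c) * ∫ x in (0:ℝ)..T, Real.exp ((c + c') * x) * x ^ s := by
  have hder : ∀ x ∈ Ioo 0 T, HasDerivAt (fun x => (1 / c) * (Real.exp (c * x) * prim c' s x))
      (Real.exp (c * x) * prim c' s x + 1 / c * (Real.exp ((c + c') * x) * x ^ s)) x := by
    intro x hx
    have h := ((exp_mul_hasDerivAt c x).mul (prim_hasDerivAt hs c' hx.1)).const_mul (1 / c)
    refine h.congr_deriv ?_
    rw [add_mul, Real.exp_add]
    field_simp
  have hprimc : ContinuousOn (fun x => Real.exp (c * x) * prim c' s x) (Icc 0 T) :=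
    ((Real.continuous_exp.comp (continuous_const.mul continuous_id)).continuousOn).mul
      (prim_continuousOn hs c' T hT)
  have hcont : ContinuousOn (fun x => (1 / c) * (Real.exp (c * x) * prim c' s x)) (Icc 0 T) :=
    continuousOn_const.mul hprimc
  have hint1 : IntervalIntegrable (fun x => Real.exp (c * x) * prim c' s x) volume 0 T := by
    apply ContinuousOn.intervalIntegrable
    rwa [uIcc_of_le hT]
  have hint := hint1.add ((integ_exp_rpow hs (c + c') 0 T).const_mul (1 / c))
  have key := intervalIntegral.integral_eq_sub_of_hasDerivAt_of_le hT hcont hder hint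
  rw [intervalIntegral.integral_add hint1
      ((integ_exp_rpow hs (c + c') 0 T).const_mul _), intervalIntegral.integral_const_mul] at key
  simp only [prim_zero, mul_zero, sub_zero] at key
  linear_combination key

lemma int_sub_rpow {s : ℝ} (hs : -1 < s) {g : ℝ → ℝ} (hg : Continuous g) (u a b : ℝ) :
    IntervalIntegrable (fun v => g v * (u - v) ^ s) volume a b := by
  have hc : Continuous fun x : ℝ => g (u - x) := hg.comp (continuous_const.sub continuous_id)
  have h := ((intervalIntegrable_rpow' (a := u - a) (b := u - b) hs).continuousOn_mul
    hc.continuousOn).comp_sub_left u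
  simpa [sub_sub_cancel] using h

lemma int_sub_rpow' {s : ℝ} (hs : -1 < s) {g : ℝ → ℝ} (hg : Continuous g) (u a b : ℝ) :
    IntervalIntegrable (fun v => g v * (v - u) ^ s) volume a b := by
  have hc : Continuous fun x : ℝ => g (x + u) := hg.comp (continuous_id.add continuous_const)
  have h := ((intervalIntegrable_rpow' (a := a - u) (b := b - u) hs).continuousOn_mul
    hc.continuousOn).comp_sub_right u
  simpa [sub_add_cancel] using h

lemma integ_abs_left {s : ℝ} (hs : -1 < s) {g : ℝ → ℝ} (hg : Continuous g) {u : ℝ}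
    (hu : 0 ≤ u) :
    IntervalIntegrable (fun v => g v * |u - v| ^ s) volume 0 u := by
  apply (int_sub_rpow hs hg u 0 u).congr
  intro v hv
  rw [uIoc_of_le hu] at hv
  show g v * (u - v) ^ s = g v * |u - v| ^ s
  rw [abs_of_nonneg (by linarith [hv.2] : (0:ℝ) ≤ u - v)]

lemma integ_abs_right {s : ℝ} (hs : -1 < s) {g : ℝ → ℝ} (hg : Continuous g) {u T : ℝ}
    (hu : u ≤ T) :
    IntervalIntegrable (fun v => g v * |u - v| ^ s) volume u T := by
  apply (int_sub_rpow' hs hg u u T).congr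
  intro v hv
  rw [uIoc_of_le hu] at hv
  show g v * (v - u) ^ s = g v * |u - v| ^ s
  rw [abs_sub_comm, abs_of_nonneg (by linarith [hv.1] : (0:ℝ) ≤ v - u)]

lemma integ_abs {s : ℝ} (hs : -1 < s) {g : ℝ → ℝ} (hg : Continuous g) {u T : ℝ}
    (hu : u ∈ Icc 0 T) :
    IntervalIntegrable (fun v => g v * |u - v| ^ s) volume 0 T :=
  (integ_abs_left hs hg hu.1).trans (integ_abs_right hs hg hu.2)

lemma split_eval {s : ℝ} (hs : -1 < s) {g : ℝ → ℝ} (hg : Continuous g) {u T : ℝ}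
    (hu : u ∈ Icc 0 T) :
    (∫ v in (0:ℝ)..T, g v * |u - v| ^ s)
      = (∫ v in (0:ℝ)..u, g v * (u - v) ^ s) + ∫ v in u..T, g v * (v - u) ^ s := by
  rw [← intervalIntegral.integral_add_adjacent_intervals
    (integ_abs_left hs hg hu.1) (integ_abs_right hs hg hu.2)]
  congr 1
  · apply intervalIntegral.integral_congr
    intro v hv
    rw [uIcc_of_le hu.1] at hv
    show g v * |u - v| ^ s = g v * (u - v) ^ s
    rw [abs_of_nonneg (by linarith [hv.2] : (0:ℝ) ≤ u - v)]
  · apply intervalIntegral.integral_congr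
    intro v hv
    rw [uIcc_of_le hu.2] at hv
    show g v * |u - v| ^ s = g v * (v - u) ^ s
    rw [abs_sub_comm, abs_of_nonneg (by linarith [hv.1] : (0:ℝ) ≤ v - u)]

lemma abs_eval1 {s T u : ℝ} (hs : -1 < s) (hs1 : 0 < s + 1) (hu : u ∈ Icc 0 T) :
    (∫ v in (0:ℝ)..T, |u - v| ^ s) = (u ^ (s + 1) + (T - u) ^ (s + 1)) / (s + 1) := by
  have h := split_eval hs (continuous_const : Continuous fun _ : ℝ => (1:ℝ)) hu
  simp only [one_mul] at h
  rw [h]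
  have h1 : (∫ v in (0:ℝ)..u, (u - v) ^ s) = ∫ x in (0:ℝ)..u, x ^ s := by
    simpa using intervalIntegral.integral_comp_sub_left (a := 0) (b := u) (fun x : ℝ => x ^ s) u
  have h2 : (∫ v in u..T, (v - u) ^ s) = ∫ x in (0:ℝ)..(T - u), x ^ s := by
    simpa using intervalIntegral.integral_comp_sub_right (a := u) (b := T) (fun x : ℝ => x ^ s) u
  rw [h1, h2, integral_rpow (Or.inl hs), integral_rpow (Or.inl hs),
    Real.zero_rpow hs1.ne']
  ring

lemma abs_eval2 {θ s T u : ℝ} (hs : -1 < s) (hu : u ∈ Icc 0 T) :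
    (∫ v in (0:ℝ)..T, Real.exp (-θ * (T - v)) * |u - v| ^ s)
      = Real.exp (-θ * (T - u)) * prim (-θ) s u
        + Real.exp (-θ * (T - u)) * prim θ s (T - u) := by
  have hgc : Continuous fun v : ℝ => Real.exp (-θ * (T - v)) :=
    Real.continuous_exp.comp (continuous_const.mul (continuous_const.sub continuous_id))
  rw [split_eval hs hgc hu]
  congr 1
  · have e1 : ∀ v : ℝ, Real.exp (-θ * (T - v)) * (u - v) ^ s
        = Real.exp (-θ * (T - u)) * (Real.exp (-θ * (u - v)) * (u - v) ^ s) := by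
      intro v
      rw [show -θ * (T - v) = -θ * (T - u) + -θ * (u - v) by ring, Real.exp_add, mul_assoc]
    simp only [e1]
    rw [intervalIntegral.integral_const_mul]
    congr 1
    show _ = ∫ x in (0:ℝ)..u, Real.exp (-θ * x) * x ^ s
    simpa using intervalIntegral.integral_comp_sub_left (a := 0) (b := u) (fun x : ℝ => Real.exp (-θ * x) * x ^ s) u
  · have e2 : ∀ v : ℝ, Real.exp (-θ * (T - v)) * (v - u) ^ s
        = Real.exp (-θ * (T - u)) * (Real.exp (θ * (v - u)) * (v - u) ^ s) := by
      intro v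
      rw [show -θ * (T - v) = -θ * (T - u) + θ * (v - u) by ring, Real.exp_add, mul_assoc]
    simp only [e2]
    rw [intervalIntegral.integral_const_mul]
    congr 1
    show _ = ∫ x in (0:ℝ)..(T - u), Real.exp (θ * x) * x ^ s
    simpa using intervalIntegral.integral_comp_sub_right (a := u) (b := T) (fun x : ℝ => Real.exp (θ * x) * x ^ s) u

lemma inner_eval {θ s T : ℝ} (hs : -1 < s) (hs1 : 0 < s + 1) {u : ℝ} (hu : u ∈ Icc 0 T) :
    (∫ v in (0:ℝ)..T,
        (1 - Real.exp (-θ * (T - u))) * (1 - Real.exp (-θ * (T - v))) * |u - v| ^ s)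
      = (1 - Real.exp (-θ * (T - u))) *
          ((u ^ (s + 1) + (T - u) ^ (s + 1)) / (s + 1)
            - (Real.exp (-θ * (T - u)) * prim (-θ) s u
               + Real.exp (-θ * (T - u)) * prim θ s (T - u))) := by
  have hgc : Continuous fun v : ℝ => Real.exp (-θ * (T - v)) :=
    Real.continuous_exp.comp (continuous_const.mul (continuous_const.sub continuous_id))
  simp only [mul_assoc]
  rw [intervalIntegral.integral_const_mul]
  congr 1
  have e3 : ∀ v : ℝ, (1 - Real.exp (-θ * (T - v))) * |u - v| ^ s
      = |u - v| ^ s - Real.exp (-θ * (T - v)) * |u - v| ^ s := by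
    intro v; ring
  simp only [e3]
  rw [intervalIntegral.integral_sub
      (by simpa using integ_abs hs (continuous_const : Continuous fun _ : ℝ => (1:ℝ)) hu)
      (integ_abs hs hgc hu),
    abs_eval1 hs hs1 hu, abs_eval2 hs hu]

lemma Ev1 {s T : ℝ} (hs : -1 < s) (hs1 : 0 < s + 1) (hT : 0 ≤ T) :
    (∫ u in (0:ℝ)..T, (u ^ (s + 1) + (T - u) ^ (s + 1)) / (s + 1))
      = 2 * T ^ (s + 2) / ((s + 1) * (s + 2)) := by
  have hc1 : Continuous fun u : ℝ => u ^ (s + 1) := cont_rpow hs1.le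
  have hc2 : Continuous fun u : ℝ => (T - u) ^ (s + 1) :=
    (cont_rpow hs1.le).comp (continuous_const.sub continuous_id)
  have e : ∀ u : ℝ, (u ^ (s + 1) + (T - u) ^ (s + 1)) / (s + 1)
      = (s + 1)⁻¹ * (u ^ (s + 1) + (T - u) ^ (s + 1)) := by intro u; ring
  simp only [e]
  rw [intervalIntegral.integral_const_mul,
    intervalIntegral.integral_add (hc1.intervalIntegrable 0 T) (hc2.intervalIntegrable 0 T)]
  have h2 : (∫ u in (0:ℝ)..T, (T - u) ^ (s + 1)) = ∫ x in (0:ℝ)..T, x ^ (s + 1) := by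
    simpa using intervalIntegral.integral_comp_sub_left (a := 0) (b := T)
      (fun x : ℝ => x ^ (s + 1)) T
  rw [h2, integral_rpow (Or.inl (by linarith)),
    Real.zero_rpow (ne_of_gt (by linarith : (0:ℝ) < s + 1 + 1)),
    show s + 1 + 1 = s + 2 by ring]
  field_simp
  ring

lemma Ev2 {θ s T : ℝ} (hs1 : 0 < s + 1) :
    (∫ u in (0:ℝ)..T, Real.exp (-θ * (T - u)) * ((u ^ (s + 1) + (T - u) ^ (s + 1)) / (s + 1)))
      = (s + 1)⁻¹ * (Real.exp (-θ * T) * (∫ x in (0:ℝ)..T, Real.exp (θ * x) * x ^ (s + 1))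
          + ∫ x in (0:ℝ)..T, Real.exp (-θ * x) * x ^ (s + 1)) := by
  have hgc : Continuous fun u : ℝ => Real.exp (-θ * (T - u)) :=
    Real.continuous_exp.comp (continuous_const.mul (continuous_const.sub continuous_id))
  have hc1 : Continuous fun u : ℝ => u ^ (s + 1) := cont_rpow hs1.le
  have hc2 : Continuous fun u : ℝ => (T - u) ^ (s + 1) :=
    (cont_rpow hs1.le).comp (continuous_const.sub continuous_id)
  have e0 : ∀ u : ℝ, Real.exp (-θ * (T - u)) * ((u ^ (s + 1) + (T - u) ^ (s + 1)) / (s + 1))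
      = (s + 1)⁻¹ * (Real.exp (-θ * (T - u)) * u ^ (s + 1)
          + Real.exp (-θ * (T - u)) * (T - u) ^ (s + 1)) := by intro u; ring
  simp only [e0]
  rw [intervalIntegral.integral_const_mul]
  congr 1
  rw [intervalIntegral.integral_add (f := fun u => Real.exp (-θ * (T - u)) * u ^ (s + 1))
    (g := fun u => Real.exp (-θ * (T - u)) * (T - u) ^ (s + 1)) ((hgc.mul hc1).intervalIntegrable 0 T)
    ((hgc.mul hc2).intervalIntegrable 0 T)]
  congr 1
  · have e1 : ∀ u : ℝ, Real.exp (-θ * (T - u)) * u ^ (s + 1)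
        = Real.exp (-θ * T) * (Real.exp (θ * u) * u ^ (s + 1)) := by
      intro u
      rw [show -θ * (T - u) = -θ * T + θ * u by ring, Real.exp_add, mul_assoc]
    simp only [e1]
    rw [intervalIntegral.integral_const_mul]
  · simpa using intervalIntegral.integral_comp_sub_left (a := 0) (b := T)
      (fun x : ℝ => Real.exp (-θ * x) * x ^ (s + 1)) T

lemma Ev3 {θ s T : ℝ} (hθ : θ ≠ 0) (hs : -1 < s) (hs1 : 0 < s + 1) (hT : 0 ≤ T) :
    (∫ u in (0:ℝ)..T, Real.exp (-θ * (T - u)) * prim (-θ) s u)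
      = Real.exp (-θ * T) * (1 / θ * Real.exp (θ * T) * prim (-θ) s T
          - 1 / θ * (T ^ (s + 1) / (s + 1))) := by
  have e1 : ∀ u : ℝ, Real.exp (-θ * (T - u)) * prim (-θ) s u
      = Real.exp (-θ * T) * (Real.exp (θ * u) * prim (-θ) s u) := by
    intro u
    rw [show -θ * (T - u) = -θ * T + θ * u by ring, Real.exp_add, mul_assoc]
  simp only [e1]
  rw [intervalIntegral.integral_const_mul]
  congr 1
  rw [P2 hs (-θ) hθ hT]
  have hJ : (∫ x in (0:ℝ)..T, Real.exp ((θ + -θ) * x) * x ^ s) = T ^ (s + 1) / (s + 1) := by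
    have e2 : ∀ x : ℝ, Real.exp ((θ + -θ) * x) * x ^ s = x ^ s := by
      intro x; rw [show θ + -θ = (0:ℝ) by ring, zero_mul, Real.exp_zero, one_mul]
    simp only [e2]
    rw [integral_rpow (Or.inl hs), Real.zero_rpow hs1.ne']
    ring
  rw [hJ]

lemma Ev4 {θ s T : ℝ} (hθ : θ ≠ 0) (hs : -1 < s) (hs1 : 0 < s + 1) (hT : 0 ≤ T) :
    (∫ u in (0:ℝ)..T, Real.exp (-θ * (T - u)) * prim θ s (T - u))
      = 1 / -θ * Real.exp (-θ * T) * prim θ s T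
          - 1 / -θ * (T ^ (s + 1) / (s + 1)) := by
  have h : (∫ u in (0:ℝ)..T, Real.exp (-θ * (T - u)) * prim θ s (T - u))
      = ∫ x in (0:ℝ)..T, Real.exp (-θ * x) * prim θ s x := by
    simpa using intervalIntegral.integral_comp_sub_left (a := 0) (b := T)
      (fun x : ℝ => Real.exp (-θ * x) * prim θ s x) T
  rw [h, P2 hs θ (neg_ne_zero.2 hθ) hT]
  have hJ : (∫ x in (0:ℝ)..T, Real.exp ((-θ + θ) * x) * x ^ s) = T ^ (s + 1) / (s + 1) := by
    have e2 : ∀ x : ℝ, Real.exp ((-θ + θ) * x) * x ^ s = x ^ s := by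
      intro x; rw [show -θ + θ = (0:ℝ) by ring, zero_mul, Real.exp_zero, one_mul]
    simp only [e2]
    rw [integral_rpow (Or.inl hs), Real.zero_rpow hs1.ne']
    ring
  rw [hJ]

lemma Ev5 {θ s T : ℝ} (hθ : θ ≠ 0) (hs : -1 < s) (hT : 0 ≤ T) :
    (∫ u in (0:ℝ)..T, Real.exp (-2 * θ * (T - u)) * prim (-θ) s u)
      = Real.exp (-2 * θ * T) * (1 / (2 * θ) * Real.exp (2 * θ * T) * prim (-θ) s T
          - 1 / (2 * θ) * prim θ s T) := by
  have e1 : ∀ u : ℝ, Real.exp (-2 * θ * (T - u)) * prim (-θ) s u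
      = Real.exp (-2 * θ * T) * (Real.exp (2 * θ * u) * prim (-θ) s u) := by
    intro u
    rw [show -2 * θ * (T - u) = -2 * θ * T + 2 * θ * u by ring, Real.exp_add, mul_assoc]
  simp only [e1]
  rw [intervalIntegral.integral_const_mul]
  congr 1
  rw [P2 hs (-θ) (by simpa using hθ : 2 * θ ≠ 0) hT]
  have hG : (∫ x in (0:ℝ)..T, Real.exp ((2 * θ + -θ) * x) * x ^ s) = prim θ s T := by
    simp only [show 2 * θ + -θ = θ by ring]
    rfl
  rw [hG]

lemma Ev6 {θ s T : ℝ} (hθ : θ ≠ 0) (hs : -1 < s) (hT : 0 ≤ T) :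
    (∫ u in (0:ℝ)..T, Real.exp (-2 * θ * (T - u)) * prim θ s (T - u))
      = 1 / (-2 * θ) * Real.exp (-2 * θ * T) * prim θ s T
          - 1 / (-2 * θ) * prim (-θ) s T := by
  have h : (∫ u in (0:ℝ)..T, Real.exp (-2 * θ * (T - u)) * prim θ s (T - u))
      = ∫ x in (0:ℝ)..T, Real.exp (-2 * θ * x) * prim θ s x := by
    simpa using intervalIntegral.integral_comp_sub_left (a := 0) (b := T)
      (fun x : ℝ => Real.exp (-2 * θ * x) * prim θ s x) T
  rw [h, P2 hs θ (by simpa using hθ : -2 * θ ≠ 0) hT]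
  have hF : (∫ x in (0:ℝ)..T, Real.exp ((-2 * θ + θ) * x) * x ^ s) = prim (-θ) s T := by
    simp only [show -2 * θ + θ = -θ by ring]
    rfl
  rw [hF]

set_option maxHeartbeats 2000000 in
/-- For `θ, T > 0`, `H ∈ (1/2,1)`, `α_H = H(2H-1)`:
the fractional double integral in the zero-coupon bond price evaluates as
`(α_H/(2θ²)) ∫_0^T ∫_0^T (1-e^{-θ(T-u)})(1-e^{-θ(T-v)})|u-v|^{2H-2} du dv
 = (α_H/θ²)[ -(e^{-2θT}/(2θ))∫_0^T e^{θx}x^{2H-2}dx + (1/(2θ))∫_0^T e^{-θx}x^{2H-2}dx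
   - (1/(2H-1))∫_0^T e^{-θx}x^{2H-1}dx - (e^{-θT}/(2H-1))∫_0^T e^{θx}x^{2H-1}dx
   + T^{2H}/((2H)(2H-1)) ]`. -/
theorem stmt_11 (θ T H : ℝ) (hθ : 0 < θ) (hT : 0 < T) (hH : H ∈ Set.Ioo (1/2 : ℝ) 1) :
    (H * (2 * H - 1) / (2 * θ ^ 2)) *
        ∫ u in (0:ℝ)..T, ∫ v in (0:ℝ)..T,
          (1 - Real.exp (-θ * (T - u))) * (1 - Real.exp (-θ * (T - v))) *
            |u - v| ^ (2 * H - 2) =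
      (H * (2 * H - 1) / θ ^ 2) *
        (-(Real.exp (-2 * θ * T) / (2 * θ)) *
            (∫ x in (0:ℝ)..T, Real.exp (θ * x) * x ^ (2 * H - 2)) +
          (1 / (2 * θ)) * (∫ x in (0:ℝ)..T, Real.exp (-θ * x) * x ^ (2 * H - 2)) -
          (1 / (2 * H - 1)) * (∫ x in (0:ℝ)..T, Real.exp (-θ * x) * x ^ (2 * H - 1)) -
          (Real.exp (-θ * T) / (2 * H - 1)) *
            (∫ x in (0:ℝ)..T, Real.exp (θ * x) * x ^ (2 * H - 1)) +
          T ^ (2 * H) / ((2 * H) * (2 * H - 1))) := by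
  obtain ⟨hH1, hH2⟩ := hH
  have hθ' : θ ≠ 0 := ne_of_gt hθ
  have hT' : (0:ℝ) ≤ T := hT.le
  set s : ℝ := 2 * H - 2 with hs_def
  have hs : -1 < s := by rw [hs_def]; linarith
  have hs1 : 0 < s + 1 := by rw [hs_def]; linarith
  have hs2 : 0 < s + 2 := by rw [hs_def]; linarith
  have es1 : (2 * H - 1 : ℝ) = s + 1 := by rw [hs_def]; ring
  have es2 : (2 * H : ℝ) = s + 2 := by rw [hs_def]; ring
  simp only [es1]
  simp only [es2]
  -- inner integral evaluation
  rw [intervalIntegral.integral_congr (μ := volume) (g := fun u =>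
      (1 - Real.exp (-θ * (T - u))) *
        ((u ^ (s + 1) + (T - u) ^ (s + 1)) / (s + 1)
          - (Real.exp (-θ * (T - u)) * prim (-θ) s u
             + Real.exp (-θ * (T - u)) * prim θ s (T - u))))
    (fun u hu => inner_eval hs hs1 (by rwa [uIcc_of_le hT'] at hu))]
  -- expand the product into six terms
  rw [intervalIntegral.integral_congr (μ := volume) (g := fun u =>
      ((((((u ^ (s + 1) + (T - u) ^ (s + 1)) / (s + 1)
        - Real.exp (-θ * (T - u)) * ((u ^ (s + 1) + (T - u) ^ (s + 1)) / (s + 1)))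
        - Real.exp (-θ * (T - u)) * prim (-θ) s u)
        - Real.exp (-θ * (T - u)) * prim θ s (T - u))
        + Real.exp (-2 * θ * (T - u)) * prim (-θ) s u)
        + Real.exp (-2 * θ * (T - u)) * prim θ s (T - u)))
    (fun u _ => by
      have h2 : Real.exp (-2 * θ * (T - u)) = Real.exp (-θ * (T - u)) * Real.exp (-θ * (T - u)) := by
        rw [← Real.exp_add]; congr 1; ring
      show (1 - Real.exp (-θ * (T - u))) * _ = _
      simp only [h2]; ring)]
  -- integrability of the six pieces
  have hgc : Continuous fun u : ℝ => Real.exp (-θ * (T - u)) :=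
    Real.continuous_exp.comp (continuous_const.mul (continuous_const.sub continuous_id))
  have hgc2 : Continuous fun u : ℝ => Real.exp (-2 * θ * (T - u)) :=
    Real.continuous_exp.comp (continuous_const.mul (continuous_const.sub continuous_id))
  have hcP : Continuous fun u : ℝ => (u ^ (s + 1) + (T - u) ^ (s + 1)) / (s + 1) :=
    ((cont_rpow hs1.le).add ((cont_rpow hs1.le).comp
      (continuous_const.sub continuous_id))).div_const _
  have hmaps : MapsTo (fun u : ℝ => T - u) (Icc 0 T) (Icc 0 T) := by
    intro u hu
    simp only [mem_Icc] at hu ⊢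
    constructor <;> linarith [hu.1, hu.2]
  have hi1 : IntervalIntegrable
      (fun u => (u ^ (s + 1) + (T - u) ^ (s + 1)) / (s + 1)) volume 0 T :=
    hcP.intervalIntegrable 0 T
  have hi2 : IntervalIntegrable
      (fun u => Real.exp (-θ * (T - u)) * ((u ^ (s + 1) + (T - u) ^ (s + 1)) / (s + 1)))
      volume 0 T := (hgc.mul hcP).intervalIntegrable 0 T
  have hi3 : IntervalIntegrable
      (fun u => Real.exp (-θ * (T - u)) * prim (-θ) s u) volume 0 T := by
    apply ContinuousOn.intervalIntegrable
    rw [uIcc_of_le hT']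
    exact hgc.continuousOn.mul (prim_continuousOn hs (-θ) T hT')
  have hi4 : IntervalIntegrable
      (fun u => Real.exp (-θ * (T - u)) * prim θ s (T - u)) volume 0 T := by
    apply ContinuousOn.intervalIntegrable
    rw [uIcc_of_le hT']
    exact hgc.continuousOn.mul ((prim_continuousOn hs θ T hT').comp
      (continuous_const.sub continuous_id).continuousOn hmaps)
  have hi5 : IntervalIntegrable
      (fun u => Real.exp (-2 * θ * (T - u)) * prim (-θ) s u) volume 0 T := by
    apply ContinuousOn.intervalIntegrable
    rw [uIcc_of_le hT']
    exact hgc2.continuousOn.mul (prim_continuousOn hs (-θ) T hT')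
  have hi6 : IntervalIntegrable
      (fun u => Real.exp (-2 * θ * (T - u)) * prim θ s (T - u)) volume 0 T := by
    apply ContinuousOn.intervalIntegrable
    rw [uIcc_of_le hT']
    exact hgc2.continuousOn.mul ((prim_continuousOn hs θ T hT').comp
      (continuous_const.sub continuous_id).continuousOn hmaps)
  rw [intervalIntegral.integral_add ((((hi1.sub hi2).sub hi3).sub hi4).add hi5) hi6,
    intervalIntegral.integral_add (((hi1.sub hi2).sub hi3).sub hi4) hi5,
    intervalIntegral.integral_sub ((hi1.sub hi2).sub hi3) hi4,
    intervalIntegral.integral_sub (hi1.sub hi2) hi3,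
    intervalIntegral.integral_sub hi1 hi2]
  rw [Ev1 hs hs1 hT', Ev2 hs1, Ev3 hθ' hs hs1 hT', Ev4 hθ' hs hs1 hT',
    Ev5 hθ' hs hT', Ev6 hθ' hs hT']
  -- rewrite the remaining power integrals via integration by parts
  rw [P1 hs hs1 hθ' hT' (c := θ), P1 hs hs1 (neg_ne_zero.2 hθ') hT' (c := -θ)]
  -- identify the basic integrals with `prim`
  rw [show (∫ x in (0:ℝ)..T, Real.exp (θ * x) * x ^ s) = prim θ s T from rfl,
    show (∫ x in (0:ℝ)..T, Real.exp (-θ * x) * x ^ s) = prim (-θ) s T from rfl]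
  -- exponential relations
  rw [show Real.exp (θ * T) = (Real.exp (-θ * T))⁻¹ by
      rw [show θ * T = -(-θ * T) by ring, Real.exp_neg],
    show Real.exp (2 * θ * T) = (Real.exp (-2 * θ * T))⁻¹ by
      rw [show 2 * θ * T = -(-2 * θ * T) by ring, Real.exp_neg]]
  have hE1 : (0:ℝ) < Real.exp (-θ * T) := Real.exp_pos _
  have hE3 : (0:ℝ) < Real.exp (-2 * θ * T) := Real.exp_pos _
  set F := prim (-θ) s T with hF
  set G := prim θ s T with hG
  set p := T ^ (s + 1) with hp
  set q := T ^ (s + 2) with hq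
  set E1 := Real.exp (-θ * T) with hE1d
  set E3 := Real.exp (-2 * θ * T) with hE3d
  have h2 : E1 ≠ 0 := hE1.ne'
  have h3 : E3 ≠ 0 := hE3.ne'
  field_simp [hθ', h2, h3, hs1.ne', hs2.ne']
  ring
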